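/- arXiv:2505.08951 — 2 statements merged into one kernel-verified Lean document; each statement's English description precedes it below -/
import Mathlib

section
/- Let s ≥ 1 be an integer and let P_1, …, P_s be a partition of {1,…,s²} into s blocks each of size s. Define the tribes function f : {0,1}^{s²} → {0,1} by f(x) = max_{i∈[s]} min_{j∈P_i} x_j. Then f has degree s², this degree being attained by the polynomial 1 − ∏_{i∈[s]} (1 − ∏_{j∈P_i} x_j), and f has sensitivity s. -/
open Finset MvPolynomial

/-- The degree of a function `f` defined on `(Asets 1) × ⋯ × (Asets n) ⊆ ℝⁿ`: the minimum
total degree of a polynomial `p ∈ ℝ[x₁,…,xₙ]` with `p(a) = f(a)` for all `a` in the domain. -/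
noncomputable def fdeg {n : ℕ} (Asets : Fin n → Finset ℝ) (f : (Fin n → ℝ) → ℝ) : ℕ :=
  sInf {k | ∃ p : MvPolynomial (Fin n) ℝ, p.totalDegree = k ∧
    ∀ x : Fin n → ℝ, (∀ i, x i ∈ Asets i) → MvPolynomial.eval x p = f x}

open scoped Classical in
/-- The local sensitivity of `f : Aⁿ → ℝ` at `x`: the number of points `y ∈ Aⁿ` differing
from `x` in exactly one coordinate and satisfying `f y ≠ f x`. -/
noncomputable def locSens {n : ℕ} (A : Finset ℝ) (f : (Fin n → ℝ) → ℝ) (x : Fin n → ℝ) : ℕ :=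
  ((Fintype.piFinset fun _ : Fin n => A).filter
    fun y => hammingDist x y = 1 ∧ f y ≠ f x).card

/-- The sensitivity of `f : Aⁿ → ℝ`: the maximum local sensitivity over all `x ∈ Aⁿ`. -/
noncomputable def sens {n : ℕ} (A : Finset ℝ) (f : (Fin n → ℝ) → ℝ) : ℕ :=
  (Fintype.piFinset fun _ : Fin n => A).sup (locSens A f)

open scoped Classical in
lemma bfact {n : ℕ} (u : Fin n → ℝ → ℝ) :
    ∑ a ∈ Fintype.piFinset (fun _ : Fin n => ({0,1} : Finset ℝ)), ∏ j, u j (a j)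
      = ∏ j, (u j 0 + u j 1) := by
  rw [Finset.sum_prod_piFinset]
  refine Finset.prod_congr rfl fun j _ => ?_
  rw [show ({0,1} : Finset ℝ) = insert 0 {1} from rfl, Finset.sum_insert (by norm_num),
    Finset.sum_singleton]

-- boolean product lemma
lemma bprod {n : ℕ} {a : Fin n → ℝ} (A : Finset (Fin n))
    (ha : ∀ j, a j = 0 ∨ a j = 1) :
    (∏ j ∈ A, a j) = if ∀ j ∈ A, a j = 1 then 1 else 0 := by
  classical
  split_ifs with h
  · exact Finset.prod_eq_one h
  · push_neg at h
    obtain ⟨j, hj, hj1⟩ := h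
    exact Finset.prod_eq_zero hj ((ha j).resolve_right hj1)

open scoped Classical in
lemma indicator_eq {n s : ℕ} (P : Fin s → Finset (Fin n)) {a : Fin n → ℝ}
    (ha : ∀ j, a j = 0 ∨ a j = 1) :
    (if ∃ i, ∀ j ∈ P i, a j = 1 then (1:ℝ) else 0)
      = 1 - ∏ i, (1 - ∏ j ∈ P i, a j) := by
  have h1 : ∀ i, (1 - ∏ j ∈ P i, a j) = if ∀ j ∈ P i, a j = 1 then (0:ℝ) else 1 := by
    intro i; rw [bprod _ ha]; split_ifs <;> ring
  simp only [h1]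
  by_cases h : ∃ i, ∀ j ∈ P i, a j = 1
  · obtain ⟨i, hi⟩ := h
    have hz : (∏ x : Fin s, if ∀ j ∈ P x, a j = 1 then (0:ℝ) else 1) = 0 :=
      Finset.prod_eq_zero (Finset.mem_univ i) (if_pos hi)
    rw [if_pos ⟨i, hi⟩, hz]
    ring
  · rw [if_neg h, Finset.prod_eq_one fun i _ => if_neg (fun hc => h ⟨i, hc⟩)]
    ring

open scoped Classical in
lemma Tf_eq {n s : ℕ} (hs : 1 ≤ s) (hn : 0 < n)
    (P : Fin s → Finset (Fin n))
    (hdisj : Pairwise fun i j => Disjoint (P i) (P j))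
    (hcover : ∀ j, ∃ i, j ∈ P i)
    (hsize : ∀ i, (P i).card = s) :
    ∑ a ∈ Fintype.piFinset (fun _ : Fin n => ({0,1} : Finset ℝ)),
      (∏ j, (2 * a j - 1)) * (if ∃ i, ∀ j ∈ P i, a j = 1 then (1:ℝ) else 0)
      = (-1) ^ (s + 1) := by
  have hbool : ∀ a ∈ Fintype.piFinset (fun _ : Fin n => ({0,1} : Finset ℝ)),
      ∀ j, a j = 0 ∨ a j = 1 := by
    intro a ha j
    have := Fintype.mem_piFinset.1 ha j
    simpa using this
  -- the U t computation
  have hU : ∀ t : Finset (Fin s),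
      ∑ a ∈ Fintype.piFinset (fun _ : Fin n => ({0,1} : Finset ℝ)),
        (∏ j, (2 * a j - 1)) * ∏ i ∈ t, ∏ j ∈ P i, a j
      = if t = Finset.univ then 1 else 0 := by
    intro t
    have hstep : ∀ a : Fin n → ℝ,
        (∏ j, (2 * a j - 1)) * ∏ i ∈ t, ∏ j ∈ P i, a j
        = ∏ j, ((2 * a j - 1) * (if j ∈ t.biUnion P then a j else 1)) := by
      intro a
      rw [Finset.prod_mul_distrib]
      congr 1
      rw [← Finset.prod_biUnion (fun i _ j _ hij => hdisj hij)]
      rw [Finset.prod_ite_mem, Finset.univ_inter]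
    simp only [hstep]
    rw [bfact (fun j t' => (2 * t' - 1) * (if j ∈ t.biUnion P then t' else 1))]
    by_cases ht : t = Finset.univ
    · rw [if_pos ht]
      refine Finset.prod_eq_one fun j _ => ?_
      have : j ∈ t.biUnion P := by
        obtain ⟨i, hi⟩ := hcover j
        exact Finset.mem_biUnion.2 ⟨i, ht ▸ Finset.mem_univ i, hi⟩
      rw [if_pos this]; norm_num
    · rw [if_neg ht]
      obtain ⟨i0, hi0⟩ : ∃ i0, i0 ∉ t := by
        by_contra hc; push_neg at hc
        exact ht (Finset.eq_univ_of_forall hc)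
      obtain ⟨j0, hj0⟩ : ∃ j0, j0 ∈ P i0 := by
        have := hsize i0
        have : (P i0).Nonempty := Finset.card_pos.1 (by omega)
        exact this
      have hj0' : j0 ∉ t.biUnion P := by
        intro hc
        obtain ⟨i, hit, hji⟩ := Finset.mem_biUnion.1 hc
        have hne : i ≠ i0 := fun h => hi0 (h ▸ hit)
        exact (Finset.disjoint_left.1 (hdisj hne)) hji hj0
      refine Finset.prod_eq_zero (Finset.mem_univ j0) ?_
      rw [if_neg hj0', if_neg hj0']; norm_num
  -- rewrite the indicator
  rw [Finset.sum_congr rfl fun a ha => by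
    rw [indicator_eq P (hbool a ha)]]
  have hsplit : ∀ a : Fin n → ℝ,
      (∏ j, (2 * a j - 1)) * (1 - ∏ i, (1 - ∏ j ∈ P i, a j))
      = (∏ j, (2 * a j - 1))
        - ∑ t ∈ (Finset.univ : Finset (Fin s)).powerset,
            (-1) ^ t.card * ((∏ j, (2 * a j - 1)) * ∏ i ∈ t, ∏ j ∈ P i, a j) := by
    intro a
    have hexp : (∏ i, (1 - ∏ j ∈ P i, a j))
        = ∑ t ∈ (Finset.univ : Finset (Fin s)).powerset,
            (-1) ^ t.card * ∏ i ∈ t, ∏ j ∈ P i, a j := by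
      have := Finset.prod_add (fun i => -(∏ j ∈ P i, a j)) (fun _ => (1:ℝ))
        (Finset.univ : Finset (Fin s))
      simp only [Finset.prod_const_one, mul_one] at this
      calc (∏ i, (1 - ∏ j ∈ P i, a j)) = ∏ i, (-(∏ j ∈ P i, a j) + 1) := by
            refine Finset.prod_congr rfl fun i _ => by ring
        _ = ∑ t ∈ (Finset.univ : Finset (Fin s)).powerset, ∏ i ∈ t, -(∏ j ∈ P i, a j) :=
            this
        _ = _ := by
            refine Finset.sum_congr rfl fun t _ => ?_
            calc ∏ i ∈ t, -(∏ j ∈ P i, a j) = ∏ i ∈ t, (-1) * ∏ j ∈ P i, a j := by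
                  refine Finset.prod_congr rfl fun i _ => by ring
              _ = (-1) ^ t.card * ∏ i ∈ t, ∏ j ∈ P i, a j := by
                  rw [Finset.prod_mul_distrib, Finset.prod_const]
    rw [hexp, mul_sub, mul_one, Finset.mul_sum]
    congr 1
    exact Finset.sum_congr rfl fun t _ => by ring
  rw [Finset.sum_congr rfl fun a _ => hsplit a, Finset.sum_sub_distrib]
  have h0 : ∑ a ∈ Fintype.piFinset (fun _ : Fin n => ({0,1} : Finset ℝ)),
      ∏ j, (2 * a j - 1) = 0 := by
    rw [bfact (fun _ t => 2 * t - 1)]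
    exact Finset.prod_eq_zero (Finset.mem_univ ⟨0, hn⟩) (by norm_num)
  rw [h0, Finset.sum_comm, zero_sub]
  have hterm : ∀ t ∈ (Finset.univ : Finset (Fin s)).powerset,
      ∑ a ∈ Fintype.piFinset (fun _ : Fin n => ({0,1} : Finset ℝ)),
        (-1) ^ t.card * ((∏ j, (2 * a j - 1)) * ∏ i ∈ t, ∏ j ∈ P i, a j)
      = (-1) ^ t.card * (if t = Finset.univ then 1 else 0) := by
    intro t _
    rw [← Finset.mul_sum, hU t]
  rw [Finset.sum_congr rfl hterm,
    Finset.sum_eq_single (Finset.univ : Finset (Fin s))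
      (fun t _ ht => by rw [if_neg ht, mul_zero])
      (fun h => absurd (Finset.mem_powerset.2 (le_refl _)) h)]
  rw [if_pos rfl, Finset.card_univ, Fintype.card_fin, pow_succ]
  ring

open scoped Classical in
lemma T_deg_lt {n : ℕ} (hn : 0 < n) (p : MvPolynomial (Fin n) ℝ)
    (hdeg : p.totalDegree < n) :
    ∑ a ∈ Fintype.piFinset (fun _ : Fin n => ({0,1} : Finset ℝ)),
      (∏ j, (2 * a j - 1)) * MvPolynomial.eval a p = 0 := by
  have h1 : ∀ a : Fin n → ℝ, (∏ j, (2 * a j - 1)) * MvPolynomial.eval a p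
      = ∑ α ∈ p.support, MvPolynomial.coeff α p * ∏ j, ((2 * a j - 1) * a j ^ α j) := by
    intro a
    rw [MvPolynomial.eval_eq', Finset.mul_sum]
    refine Finset.sum_congr rfl fun α _ => ?_
    rw [Finset.prod_mul_distrib]
    ring
  simp only [h1]
  rw [Finset.sum_comm]
  refine Finset.sum_eq_zero fun α hα => ?_
  rw [← Finset.mul_sum, bfact (fun j t => (2 * t - 1) * t ^ α j)]
  -- some j has α j = 0
  have hex : ∃ j, α j = 0 := by
    by_contra hcon
    push_neg at hcon
    have h2 : (n : ℕ) ≤ α.sum fun _ e => e := by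
      rw [Finsupp.sum_fintype _ _ (fun _ => rfl)]
      calc (n : ℕ) = ∑ _j : Fin n, 1 := by simp
        _ ≤ ∑ j, α j := Finset.sum_le_sum fun j _ => Nat.one_le_iff_ne_zero.2 (hcon j)
    exact absurd (h2.trans (MvPolynomial.le_totalDegree hα)) (Nat.not_le.2 hdeg)
  obtain ⟨j, hj⟩ := hex
  rw [Finset.prod_eq_zero (Finset.mem_univ j) (by rw [hj]; norm_num), mul_zero]

noncomputable def flp {n : ℕ} (x : Fin n → ℝ) (j : Fin n) : Fin n → ℝ :=
  Function.update x j (1 - x j)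

lemma flp_apply {n : ℕ} (x : Fin n → ℝ) (j k : Fin n) :
    flp x j k = if k = j then 1 - x j else x k := by
  simp [flp, Function.update_apply]

lemma flp_self {n : ℕ} (x : Fin n → ℝ) (j : Fin n) : flp x j j = 1 - x j := by
  simp [flp_apply]

lemma flp_ne {n : ℕ} (x : Fin n → ℝ) {j k : Fin n} (h : k ≠ j) : flp x j k = x k := by
  simp [flp_apply, h]

lemma flp_bool {n : ℕ} {x : Fin n → ℝ} (hx : ∀ k, x k = 0 ∨ x k = 1) (j : Fin n) :
    ∀ k, flp x j k = 0 ∨ flp x j k = 1 := by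
  intro k
  rw [flp_apply]
  split_ifs
  · rcases hx j with h | h <;> rw [h] <;> norm_num
  · exact hx k

open scoped Classical in
lemma card_sens_le {n s : ℕ} (P : Fin s → Finset (Fin n))
    (hdisj : Pairwise fun i j => Disjoint (P i) (P j))
    (hcover : ∀ j, ∃ i, j ∈ P i)
    (hsize : ∀ i, (P i).card = s)
    (f : (Fin n → ℝ) → ℝ)
    (hf : ∀ x : Fin n → ℝ, (∀ j, x j = 0 ∨ x j = 1) →
      f x = if ∃ i, ∀ j ∈ P i, x j = 1 then 1 else 0)
    {x : Fin n → ℝ} (hx : ∀ k, x k = 0 ∨ x k = 1) :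
    (Finset.univ.filter fun j => f (flp x j) ≠ f x).card ≤ s := by
  by_cases hc : ∃ i, ∀ j ∈ P i, x j = 1
  · -- f x = 1 ; sensitive set ⊆ P i0
    obtain ⟨i0, hi0⟩ := hc
    have hfx : f x = 1 := by rw [hf x hx, if_pos ⟨i0, hi0⟩]
    have hsub : (Finset.univ.filter fun j => f (flp x j) ≠ f x) ⊆ P i0 := by
      intro j hj
      simp only [Finset.mem_filter, Finset.mem_univ, true_and] at hj
      by_contra hjP
      apply hj
      have hflp1 : ∀ k ∈ P i0, flp x j k = 1 := by
        intro k hk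
        rw [flp_ne x (fun h : k = j => hjP (h ▸ hk))]
        exact hi0 k hk
      rw [hf _ (flp_bool hx j), hfx, if_pos ⟨i0, hflp1⟩]
    exact le_trans (Finset.card_le_card hsub) (le_of_eq (hsize i0))
  · -- f x = 0 ; at most one sensitive coordinate per block
    have hfx : f x = 0 := by rw [hf x hx, if_neg hc]
    have key : ∀ j, f (flp x j) ≠ f x →
        ∀ i, j ∈ P i → (x j = 0 ∧ ∀ k ∈ P i, k ≠ j → x k = 1) := by
      intro j hj i hji
      rw [hfx, hf _ (flp_bool hx j)] at hj
      have hcond : ∃ i1, ∀ k ∈ P i1, flp x j k = 1 := by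
        by_contra hcon
        rw [if_neg hcon] at hj
        exact hj rfl
      obtain ⟨i1, hi1⟩ := hcond
      have hji1 : j ∈ P i1 := by
        by_contra hjn
        refine hc ⟨i1, fun k hk => ?_⟩
        rw [← flp_ne x (fun h : k = j => hjn (h ▸ hk))]
        exact hi1 k hk
      have : i1 = i := by
        by_contra hne
        exact (Finset.disjoint_left.1 (hdisj hne)) hji1 hji
      subst this
      constructor
      · have := hi1 j hji1
        rw [flp_self] at this
        linarith
      · intro k hk hkj
        rw [← flp_ne x hkj]
        exact hi1 k hk
    have hbl : ∀ j : Fin n, ∃ i, j ∈ P i := hcover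
    choose bl hbl using hcover
    refine le_trans (Finset.card_le_card_of_injOn bl (fun _ _ => Finset.mem_univ _) ?_)
      (by simp)
    intro j hj j' hj' hbb
    simp only [Finset.coe_filter, Set.mem_setOf_eq, Finset.mem_univ, true_and] at hj hj'
    by_contra hne
    obtain ⟨hxj, hall⟩ := key j hj (bl j) (hbl j)
    obtain ⟨hxj', hall'⟩ := key j' hj' (bl j') (hbl j')
    have : x j = 1 := hall' j (by rw [← hbb]; exact hbl j) (hne)
    rw [hxj] at this
    norm_num at this

open scoped Classical in
lemma card_sens_x0 {n s : ℕ} (hs : 1 ≤ s) (P : Fin s → Finset (Fin n))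
    (hdisj : Pairwise fun i j => Disjoint (P i) (P j))
    (hsize : ∀ i, (P i).card = s)
    (f : (Fin n → ℝ) → ℝ)
    (hf : ∀ x : Fin n → ℝ, (∀ j, x j = 0 ∨ x j = 1) →
      f x = if ∃ i, ∀ j ∈ P i, x j = 1 then 1 else 0)
    (i0 : Fin s) :
    (Finset.univ.filter fun j =>
      f (flp (fun k => if k ∈ P i0 then (1:ℝ) else 0) j)
        ≠ f (fun k => if k ∈ P i0 then (1:ℝ) else 0)).card = s := by
  set x0 : Fin n → ℝ := fun k => if k ∈ P i0 then (1:ℝ) else 0 with hx0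
  have hx0b : ∀ k, x0 k = 0 ∨ x0 k = 1 := by
    intro k; rw [hx0]; dsimp only; split_ifs <;> simp
  have hfx0 : f x0 = 1 := by
    rw [hf x0 hx0b, if_pos ⟨i0, fun k hk => by rw [hx0]; simp [hk]⟩]
  have hfilter : (Finset.univ.filter fun j => f (flp x0 j) ≠ f x0) = P i0 := by
    ext j
    simp only [Finset.mem_filter, Finset.mem_univ, true_and]
    constructor
    · intro hj
      by_contra hjP
      apply hj
      have hflp1 : ∀ k ∈ P i0, flp x0 j k = 1 := by
        intro k hk
        rw [flp_ne x0 (fun h : k = j => hjP (h ▸ hk))]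
        simp [hx0, hk]
      rw [hf _ (flp_bool hx0b j), hfx0, if_pos ⟨i0, hflp1⟩]
    · intro hjP
      rw [hf _ (flp_bool hx0b j), hfx0]
      rw [if_neg ?_]
      · norm_num
      rintro ⟨i, hi⟩
      by_cases hii0 : i = i0
      · subst hii0
        have := hi j hjP
        rw [flp_self] at this
        have hxj : x0 j = 1 := by simp [hx0, hjP]
        rw [hxj] at this
        norm_num at this
      · obtain ⟨k, hk⟩ : (P i).Nonempty := Finset.card_pos.1 (by rw [hsize]; omega)
        have hkP : k ∉ P i0 := Finset.disjoint_left.1 (hdisj hii0) hk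
        have hkj : k ≠ j := fun h => hkP (h ▸ hjP)
        have := hi k hk
        rw [flp_ne x0 hkj] at this
        simp [hx0, hkP] at this
  rw [hfilter, hsize]

lemma flp_value_ne {n : ℕ} {x : Fin n → ℝ} (hx : ∀ k, x k = 0 ∨ x k = 1) (j : Fin n) :
    flp x j j ≠ x j := by
  rw [flp_self]
  rcases hx j with h | h <;> rw [h] <;> norm_num

open scoped Classical in
lemma hamming_flp {n : ℕ} {x : Fin n → ℝ} (hx : ∀ k, x k = 0 ∨ x k = 1) (j : Fin n) :
    hammingDist x (flp x j) = 1 := by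
  have : ({k | x k ≠ flp x j k} : Finset (Fin n)) = {j} := by
    ext k
    simp only [Finset.mem_filter, Finset.mem_univ, true_and, Finset.mem_singleton]
    constructor
    · intro hk
      by_contra hkj
      exact hk (flp_ne x hkj).symm
    · rintro rfl
      exact fun h => flp_value_ne hx _ h.symm
  rw [hammingDist, this, Finset.card_singleton]

open scoped Classical in
lemma locSens_eq {n : ℕ} (f : (Fin n → ℝ) → ℝ) {x : Fin n → ℝ}
    (hx : ∀ k, x k = 0 ∨ x k = 1) :
    locSens ({0,1} : Finset ℝ) f x
      = (Finset.univ.filter fun j => f (flp x j) ≠ f x).card := by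
  rw [locSens]
  refine (Finset.card_bij (fun j _ => flp x j) ?_ ?_ ?_).symm
  · -- maps to
    intro j hj
    simp only [Finset.mem_filter, Finset.mem_univ, true_and] at hj ⊢
    refine ⟨Fintype.mem_piFinset.2 fun k => ?_, hamming_flp hx j, hj⟩
    rcases flp_bool hx j k with h | h <;> simp [h]
  · -- injective
    intro j _ j' _ hjj'
    by_contra hne
    replace hjj' : flp x j = flp x j' := hjj'
    have h1 : flp x j j = flp x j' j := by rw [hjj']
    rw [flp_self, flp_ne x hne] at h1
    rcases hx j with h | h <;> rw [h] at h1 <;> norm_num at h1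
  · -- surjective
    intro y hy
    simp only [Finset.mem_filter, Finset.mem_univ, true_and] at hy
    obtain ⟨hy1, hy2, hy3⟩ := hy
    have hybool : ∀ k, y k = 0 ∨ y k = 1 := by
      intro k
      have := Fintype.mem_piFinset.1 hy1 k
      simpa using this
    obtain ⟨j, hj⟩ := Finset.card_eq_one.1 (by rw [← hammingDist]; exact hy2 :
      ({k | x k ≠ y k} : Finset (Fin n)).card = 1)
    have hjy : x j ≠ y j := by
      have : j ∈ ({k | x k ≠ y k} : Finset (Fin n)) := hj ▸ Finset.mem_singleton_self j
      simpa using this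
    have hagree : ∀ k, k ≠ j → x k = y k := by
      intro k hk
      by_contra hc
      have : k ∈ ({k | x k ≠ y k} : Finset (Fin n)) := by simpa using hc
      rw [hj, Finset.mem_singleton] at this
      exact hk this
    have hyflp : flp x j = y := by
      funext k
      rw [flp_apply]
      split_ifs with h
      · subst h
        rcases hx k with h1 | h1 <;> rcases hybool k with h2 | h2
        · exact absurd (h1.trans h2.symm) hjy
        · rw [h1, h2]; norm_num
        · rw [h1, h2]; norm_num
        · exact absurd (h1.trans h2.symm) hjy
      · exact hagree k h
    refine ⟨j, ?_, hyflp⟩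
    simp only [Finset.mem_filter, Finset.mem_univ, true_and]
    rw [hyflp]
    exact hy3

open scoped Classical in
/-- The tribes function with `s` tribes of size `s`: given a partition `P₁, …, P_s` of
`{1,…,s²}` into blocks of size `s`, on Boolean inputs `x ∈ {0,1}^{s²}` the function
`f(x) = max_i min_{j ∈ P_i} x_j` (which equals `1` iff some block has all coordinates `1`)
has degree exactly `s²`, attained by the polynomial `1 - ∏ᵢ (1 - ∏_{j ∈ Pᵢ} xⱼ)`, and
sensitivity exactly `s`. -/
theorem tribes_degree_sensitivity (s : ℕ) (hs : 1 ≤ s)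
    (P : Fin s → Finset (Fin (s ^ 2)))
    (hdisj : Pairwise fun i j => Disjoint (P i) (P j))
    (hcover : ∀ j, ∃ i, j ∈ P i)
    (hsize : ∀ i, (P i).card = s)
    (f : (Fin (s ^ 2) → ℝ) → ℝ)
    (hf : ∀ x : Fin (s ^ 2) → ℝ, (∀ j, x j ∈ ({0, 1} : Finset ℝ)) →
      f x = if ∃ i, ∀ j ∈ P i, x j = 1 then 1 else 0) :
    fdeg (fun _ => ({0, 1} : Finset ℝ)) f = s ^ 2 ∧
    ((1 - ∏ i, (1 - ∏ j ∈ P i, X j) : MvPolynomial (Fin (s ^ 2)) ℝ).totalDegree = s ^ 2 ∧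
      ∀ x : Fin (s ^ 2) → ℝ, (∀ j, x j ∈ ({0, 1} : Finset ℝ)) →
        MvPolynomial.eval x (1 - ∏ i, (1 - ∏ j ∈ P i, X j) : MvPolynomial (Fin (s ^ 2)) ℝ)
          = f x) ∧
    sens ({0, 1} : Finset ℝ) f = s := by
  classical
  have hn : 0 < s ^ 2 := by positivity
  have hbool : ∀ x : Fin (s ^ 2) → ℝ, (∀ j, x j ∈ ({0, 1} : Finset ℝ)) → ∀ j, x j = 0 ∨ x j = 1 := by
    intro x hx j
    have := hx j
    simpa using this
  have hmem : ∀ x : Fin (s ^ 2) → ℝ, (∀ j, x j = 0 ∨ x j = 1) → ∀ j, x j ∈ ({0, 1} : Finset ℝ) := by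
    intro x hx j
    rcases hx j with h | h <;> simp [h]
  have hf' : ∀ x : Fin (s ^ 2) → ℝ, (∀ j, x j = 0 ∨ x j = 1) →
      f x = if ∃ i, ∀ j ∈ P i, x j = 1 then 1 else 0 := fun x hx => hf x (hmem x hx)
  set q : MvPolynomial (Fin (s ^ 2)) ℝ := 1 - ∏ i, (1 - ∏ j ∈ P i, X j) with hq
  -- q represents f
  have hrep : ∀ x : Fin (s ^ 2) → ℝ, (∀ j, x j ∈ ({0, 1} : Finset ℝ)) →
      MvPolynomial.eval x q = f x := by
    intro x hx
    have hx' := hbool x hx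
    rw [hf x hx, indicator_eq P hx', hq]
    simp
  -- the signed sum over the cube is nonzero
  have hTf : ∑ a ∈ Fintype.piFinset (fun _ : Fin (s ^ 2) => ({0,1} : Finset ℝ)),
      (∏ j, (2 * a j - 1)) * f a = (-1) ^ (s + 1) := by
    rw [Finset.sum_congr rfl fun a ha => by
      rw [hf' a (fun j => by simpa using Fintype.mem_piFinset.1 ha j)]]
    exact Tf_eq hs hn P hdisj hcover hsize
  have hTf_ne : ((-1 : ℝ)) ^ (s + 1) ≠ 0 := by
    intro h
    have := pow_eq_zero_iff (n := s + 1) (by omega) |>.1 h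
    norm_num at this
  -- any representing polynomial has degree ≥ s ^ 2
  have hge : ∀ p : MvPolynomial (Fin (s ^ 2)) ℝ,
      (∀ x : Fin (s ^ 2) → ℝ, (∀ j, x j ∈ ({0, 1} : Finset ℝ)) → MvPolynomial.eval x p = f x) →
      s ^ 2 ≤ p.totalDegree := by
    intro p hp
    by_contra hlt
    push_neg at hlt
    have h0 := T_deg_lt hn p hlt
    rw [Finset.sum_congr rfl fun a ha => by
      rw [hp a (fun j => Fintype.mem_piFinset.1 ha j)]] at h0
    rw [hTf] at h0
    exact hTf_ne h0
  -- degree of q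
  have hqle : q.totalDegree ≤ s ^ 2 := by
    refine le_trans ?_ (le_of_eq (pow_two s).symm)
    rw [hq]
    refine le_trans (MvPolynomial.totalDegree_sub _ _) (max_le (by simp) ?_)
    refine le_trans (MvPolynomial.totalDegree_finset_prod _ _) ?_
    calc ∑ i : Fin s, (1 - ∏ j ∈ P i, X j : MvPolynomial (Fin (s ^ 2)) ℝ).totalDegree
        ≤ ∑ _i : Fin s, s := by
          refine Finset.sum_le_sum fun i _ => ?_
          refine le_trans (MvPolynomial.totalDegree_sub _ _) (max_le (by simp) ?_)
          refine le_trans (MvPolynomial.totalDegree_finset_prod _ _) ?_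
          calc ∑ j ∈ P i, (X j : MvPolynomial (Fin (s ^ 2)) ℝ).totalDegree
              = ∑ j ∈ P i, 1 := by
                refine Finset.sum_congr rfl fun j _ => MvPolynomial.totalDegree_X j
            _ = s := by rw [Finset.sum_const, smul_eq_mul, mul_one, hsize]
            _ ≤ s := le_rfl
      _ = s * s := by rw [Finset.sum_const, smul_eq_mul, Finset.card_univ, Fintype.card_fin]
  have hqdeg : q.totalDegree = s ^ 2 := le_antisymm hqle (hge q hrep)
  refine ⟨?_, ⟨hqdeg, hrep⟩, ?_⟩
  · -- fdeg
    rw [fdeg]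
    have hmemS : s ^ 2 ∈ {k | ∃ p : MvPolynomial (Fin (s ^ 2)) ℝ, p.totalDegree = k ∧
        ∀ x : Fin (s ^ 2) → ℝ, (∀ i, x i ∈ ({0,1} : Finset ℝ)) → MvPolynomial.eval x p = f x} :=
      ⟨q, hqdeg, hrep⟩
    refine le_antisymm (Nat.sInf_le hmemS) (le_csInf ⟨_, hmemS⟩ ?_)
    rintro k ⟨p, hpk, hpr⟩
    exact hpk ▸ hge p hpr
  · -- sensitivity
    rw [sens]
    refine le_antisymm (Finset.sup_le fun x hx => ?_) ?_
    · have hx' : ∀ k, x k = 0 ∨ x k = 1 := fun k => by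
        simpa using Fintype.mem_piFinset.1 hx k
      rw [locSens_eq f hx']
      exact card_sens_le P hdisj hcover hsize f hf' hx'
    · set i0 : Fin s := ⟨0, hs⟩ with hi0
      set x0 : Fin (s ^ 2) → ℝ := fun k => if k ∈ P i0 then (1:ℝ) else 0 with hx0
      have hx0b : ∀ k, x0 k = 0 ∨ x0 k = 1 := by
        intro k; rw [hx0]; dsimp only; split_ifs <;> simp
      have hx0mem : x0 ∈ Fintype.piFinset (fun _ : Fin (s ^ 2) => ({0,1} : Finset ℝ)) :=
        Fintype.mem_piFinset.2 fun k => hmem x0 hx0b k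
      have := Finset.le_sup (f := locSens ({0,1} : Finset ℝ) f) hx0mem
      refine le_trans (le_of_eq ?_) this
      rw [locSens_eq f hx0b]
      exact (card_sens_x0 hs P hdisj hsize f hf' i0).symm
end

section
/- Let m ≥ 1 and n ≥ n' ≥ 1 be integers and let P_1, …, P_{n'} be a partition of {1,…,n} into n' nonempty blocks each of size at most ⌈n/n'⌉, and let σ : (ℤ/mℤ)^n → (ℤ/mℤ)^{n'} be the block-sum map σ(x) = (Σ_{i∈P_1} x_i, …, Σ_{i∈P_{n'}} x_i). Then for every x ∈ (ℤ/mℤ)^n and every y' ∈ (ℤ/mℤ)^{n'} at Hamming distance 1 from σ(x), the number of points y ∈ σ^{-1}(y') at Hamming distance 1 from x is at most ⌈n/n'⌉. -/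
open Finset

/-- Let `m ≥ 1`, `n ≥ n' ≥ 1`, and let `P₁, …, P_{n'}` be a partition of `{1,…,n}` into `n'`
nonempty blocks each of size at most `⌈n/n'⌉` (i.e. `(n + n' - 1)/n'` in natural-number
division), and let `σ : (ℤ/mℤ)ⁿ → (ℤ/mℤ)^{n'}` be the block-sum map. Then for every
`x ∈ (ℤ/mℤ)ⁿ` and every `y'` at Hamming distance `1` from `σ(x)`, there are at most
`⌈n/n'⌉` points `y ∈ σ⁻¹(y')` at Hamming distance `1` from `x`. -/
theorem blockSum_fiber_neighbors (m n n' : ℕ) (hm : 1 ≤ m) (hn' : 1 ≤ n') (hnn : n' ≤ n)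
    (P : Fin n' → Finset (Fin n))
    (hdisj : Pairwise fun i j => Disjoint (P i) (P j))
    (hcover : ∀ j, ∃ i, j ∈ P i)
    (hne : ∀ i, (P i).Nonempty)
    (hsize : ∀ i, (P i).card ≤ (n + n' - 1) / n')
    (x : Fin n → ZMod m) (y' : Fin n' → ZMod m)
    (hy' : hammingDist (fun i => ∑ j ∈ P i, x j) y' = 1) :
    Nat.card {y : Fin n → ZMod m //
        (fun i => ∑ j ∈ P i, y j) = y' ∧ hammingDist x y = 1}
      ≤ (n + n' - 1) / n' := by
  haveI : NeZero m := ⟨by omega⟩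
  rw [hammingDist] at hy'
  obtain ⟨i₀, hi₀⟩ := Finset.card_eq_one.mp hy'
  have hi₀ne : (∑ j ∈ P i₀, x j) ≠ y' i₀ := by
    have : i₀ ∈ Finset.univ.filter fun i => (fun i => ∑ j ∈ P i, x j) i ≠ y' i := by
      rw [hi₀]; exact mem_singleton_self i₀
    simpa using this
  have key : ∀ y : {y : Fin n → ZMod m //
      (fun i => ∑ j ∈ P i, y j) = y' ∧ hammingDist x y = 1},
      ∃ j ∈ P i₀, (∀ k, k ≠ j → y.1 k = x k) ∧
        y.1 j = x j + (y' i₀ - ∑ l ∈ P i₀, x l) := by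
    rintro ⟨y, hy, hd⟩
    rw [hammingDist] at hd
    obtain ⟨j, hj⟩ := Finset.card_eq_one.mp hd
    have hmem : ∀ k, x k ≠ y k ↔ k = j := by
      intro k
      constructor
      · intro h
        have : k ∈ Finset.univ.filter fun i => x i ≠ y i := by simp [h]
        rw [hj] at this; exact mem_singleton.mp this
      · intro hk
        have : k ∈ Finset.univ.filter fun i => x i ≠ y i := by
          rw [hj, hk]; exact mem_singleton_self _
        simpa using this
    have heq : ∀ k, k ≠ j → y k = x k := by
      intro k hk
      by_contra h
      exact hk ((hmem k).mp (Ne.symm h))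
    obtain ⟨i₁, hji⟩ := hcover j
    have hsum : ∀ i, j ∉ P i → ∑ l ∈ P i, y l = ∑ l ∈ P i, x l := by
      intro i hji'
      exact Finset.sum_congr rfl fun l hl => heq l (fun h => hji' (h ▸ hl))
    have hi₁ : i₁ = i₀ := by
      by_contra hne'
      have hj0 : j ∉ P i₀ := Finset.disjoint_left.mp (hdisj hne') hji
      have : ∑ l ∈ P i₀, y l = y' i₀ := congrFun hy i₀
      rw [hsum i₀ hj0] at this
      exact hi₀ne this
    subst hi₁
    refine ⟨j, hji, heq, ?_⟩
    have h1 : ∑ l ∈ P i₁, y l = y' i₁ := congrFun hy i₁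
    rw [← Finset.add_sum_erase _ y hji] at h1
    have h2 : ∑ l ∈ (P i₁).erase j, y l = ∑ l ∈ (P i₁).erase j, x l :=
      Finset.sum_congr rfl fun l hl => heq l (Finset.ne_of_mem_erase hl)
    rw [h2] at h1
    have h3 : ∑ l ∈ P i₁, x l = x j + ∑ l ∈ (P i₁).erase j, x l :=
      (Finset.add_sum_erase _ x hji).symm
    rw [h3]
    linear_combination h1
  classical
  have hinj : Function.Injective (fun y : {y : Fin n → ZMod m //
      (fun i => ∑ j ∈ P i, y j) = y' ∧ hammingDist x y = 1} =>
      (⟨(key y).choose, (key y).choose_spec.1⟩ : {j // j ∈ P i₀})) := by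
    intro y₁ y₂ h
    obtain ⟨_, h₁a, h₁b⟩ := (key y₁).choose_spec
    obtain ⟨_, h₂a, h₂b⟩ := (key y₂).choose_spec
    have hjj : (key y₁).choose = (key y₂).choose := congrArg Subtype.val h
    have h₂b' : y₂.1 (key y₁).choose = x (key y₁).choose + (y' i₀ - ∑ l ∈ P i₀, x l) := by
      rw [hjj]; exact h₂b
    apply Subtype.ext
    funext k
    by_cases hk : k = (key y₁).choose
    · subst hk
      rw [h₁b, h₂b']
    · rw [h₁a k hk, h₂a k (hjj ▸ hk)]
  calc Nat.card {y : Fin n → ZMod m //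
        (fun i => ∑ j ∈ P i, y j) = y' ∧ hammingDist x y = 1}
      ≤ Nat.card {j // j ∈ P i₀} := Nat.card_le_card_of_injective _ hinj
    _ = (P i₀).card := Nat.card_eq_finsetCard _
    _ ≤ (n + n' - 1) / n' := hsize i₀
end
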